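/- arXiv:2505.05526 — 5 statements merged into one kernel-verified Lean document; each statement's English description precedes it below -/
import Mathlib

section
/- The Borel σ-algebra of ℝ (the smallest σ-algebra containing all open sets) coincides with the smallest family 𝒞 of subsets of ℝ which contains all open sets and is closed under countable intersections and under countable unions of pairwise disjoint sets. -/
namespace BorelSmallest

def P (S : Set (Set ℝ)) : Prop :=
  (∀ U : Set ℝ, IsOpen U → U ∈ S) ∧
  (∀ g : ℕ → Set ℝ, (∀ n, g n ∈ S) → (⋂ n, g n) ∈ S) ∧
  (∀ g : ℕ → Set ℝ, (∀ n, g n ∈ S) →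
    (Pairwise fun i j => Disjoint (g i) (g j)) → (⋃ n, g n) ∈ S)

def C : Set (Set ℝ) := ⋂₀ {S | P S}

lemma mem_C {A : Set ℝ} : A ∈ C ↔ ∀ S, P S → A ∈ S := Set.mem_sInter

lemma C_open {U : Set ℝ} (h : IsOpen U) : U ∈ C :=
  mem_C.2 fun _ hS => hS.1 U h

lemma C_iInter {g : ℕ → Set ℝ} (h : ∀ n, g n ∈ C) : (⋂ n, g n) ∈ C :=
  mem_C.2 fun S hS => hS.2.1 g (fun n => mem_C.1 (h n) S hS)

lemma C_dUnion {g : ℕ → Set ℝ} (h : ∀ n, g n ∈ C)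
    (hd : Pairwise fun i j => Disjoint (g i) (g j)) : (⋃ n, g n) ∈ C :=
  mem_C.2 fun S hS => hS.2.2 g (fun n => mem_C.1 (h n) S hS) hd

lemma C_univ : (Set.univ : Set ℝ) ∈ C := C_open isOpen_univ

lemma C_binter {A B : Set ℝ} (hA : A ∈ C) (hB : B ∈ C) : A ∩ B ∈ C := by
  have : A ∩ B = ⋂ n : ℕ, (if n = 0 then A else B) := by
    ext x; simp [Set.mem_iInter]
    constructor
    · rintro ⟨ha, hb⟩ n; split <;> assumption
    · intro h; exact ⟨by simpa using h 0, by simpa using h 1⟩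
  rw [this]
  exact C_iInter fun n => by split <;> assumption

lemma C_closed {F : Set ℝ} (h : IsClosed F) : F ∈ C := by
  obtain ⟨T, hTopen, hTc, rfl⟩ := h.isGδ
  rcases T.eq_empty_or_nonempty with rfl | hne
  · simpa using C_univ
  · obtain ⟨f, rfl⟩ := hTc.exists_eq_range hne
    rw [Set.sInter_range]
    exact C_iInter fun n => C_open (hTopen _ ⟨n, rfl⟩)

lemma C_union {g : ℕ → Set ℝ} (h : ∀ n, g n ∈ C) (hc : ∀ n, (g n)ᶜ ∈ C) :
    (⋃ n, g n) ∈ C := by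
  set h' : ℕ → Set ℝ := fun n => g n ∩ ⋂ m, (if m < n then (g m)ᶜ else Set.univ) with hh'
  have hmem : ∀ n, h' n ∈ C := by
    intro n
    refine C_binter (h n) (C_iInter fun m => ?_)
    split
    · exact hc m
    · exact C_univ
  have hsub : ∀ n, h' n ⊆ g n := fun n => Set.inter_subset_left
  have hsubc : ∀ m n, m < n → h' n ⊆ (g m)ᶜ := by
    intro m n hmn x hx
    have := hx.2
    rw [Set.mem_iInter] at this
    have := this m
    simpa [hmn] using this
  have hd : Pairwise fun i j => Disjoint (h' i) (h' j) := by
    intro i j hij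
    rcases lt_or_gt_of_ne hij with hlt | hlt
    · exact Set.disjoint_left.2 fun x hxi hxj => hsubc i j hlt hxj (hsub i hxi)
    · exact Set.disjoint_left.2 fun x hxi hxj => hsubc j i hlt hxi (hsub j hxj)
  have heq : (⋃ n, g n) = ⋃ n, h' n := by
    classical
    ext x
    simp only [Set.mem_iUnion]
    constructor
    · rintro ⟨n, hn⟩
      have hex : ∃ n, x ∈ g n := ⟨n, hn⟩
      refine ⟨Nat.find hex, Nat.find_spec hex, ?_⟩
      rw [Set.mem_iInter]
      intro m
      split
      · exact Nat.find_min hex ‹m < _›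
      · trivial
    · rintro ⟨n, hn⟩
      exact ⟨n, hsub n hn⟩
  rw [heq]
  exact C_dUnion hmem hd

lemma C_compl {A : Set ℝ} (hA : A ∈ C) : Aᶜ ∈ C := by
  set D : Set (Set ℝ) := {A | A ∈ C ∧ Aᶜ ∈ C} with hD
  have hPD : P D := by
    refine ⟨fun U hU => ⟨C_open hU, C_closed (isClosed_compl_iff.2 hU)⟩, ?_, ?_⟩
    · intro g hg
      refine ⟨C_iInter fun n => (hg n).1, ?_⟩
      rw [Set.compl_iInter]
      exact C_union (fun n => (hg n).2) (fun n => by simpa using (hg n).1)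
    · intro g hg hdisj
      refine ⟨C_dUnion (fun n => (hg n).1) hdisj, ?_⟩
      rw [Set.compl_iUnion]
      exact C_iInter fun n => (hg n).2
  exact (mem_C.1 hA D hPD).2

def m : MeasurableSpace ℝ where
  MeasurableSet' s := s ∈ C
  measurableSet_empty := C_open isOpen_empty
  measurableSet_compl _ h := C_compl h
  measurableSet_iUnion g h := C_union h (fun n => C_compl (h n))

end BorelSmallest

/-- The Borel σ-algebra of `ℝ` coincides with the smallest family of subsets
of `ℝ` containing the open sets and closed under countable intersections and
countable disjoint unions. -/
theorem borel_eq_smallest_class :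
    {s : Set ℝ | MeasurableSet s} =
      ⋂₀ {S : Set (Set ℝ) |
        (∀ U : Set ℝ, IsOpen U → U ∈ S) ∧
        (∀ g : ℕ → Set ℝ, (∀ n, g n ∈ S) → (⋂ n, g n) ∈ S) ∧
        (∀ g : ℕ → Set ℝ, (∀ n, g n ∈ S) →
          (Pairwise fun i j => Disjoint (g i) (g j)) → (⋃ n, g n) ∈ S)} := by
  apply Set.Subset.antisymm
  · -- Borel ⊆ C
    intro s hs
    have hle : (inferInstance : MeasurableSpace ℝ) ≤ BorelSmallest.m := by
      rw [BorelSpace.measurable_eq (α := ℝ), borel]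
      exact MeasurableSpace.generateFrom_le fun t ht => BorelSmallest.C_open ht
    exact hle s hs
  · -- C ⊆ Borel
    intro s hs
    refine hs {t | MeasurableSet t} ⟨fun U hU => hU.measurableSet, ?_, ?_⟩
    · intro g hg
      simp only [Set.mem_setOf_eq] at hg ⊢
      exact MeasurableSet.iInter hg
    · intro g hg _
      simp only [Set.mem_setOf_eq] at hg ⊢
      exact MeasurableSet.iUnion hg
end

section
/- Let S and T be bounded self-adjoint operators on a complex Hilbert space H. Then the Hausdorff distance between their spectra satisfies d_H(σ(S), σ(T)) ≤ ‖S − T‖, where d_H(A,B) = max( sup_{x∈A} inf_{y∈B} |x−y| , sup_{y∈B} inf_{x∈A} |x−y| ). -/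
open Metric

/-- Key lemma: in a C⋆-algebra, any point of the spectrum of a self-adjoint element `S`
is within `‖S - T‖` of the spectrum of a self-adjoint element `T`. -/
lemma infDist_spectrum_le_of_isSelfAdjoint {A : Type*} [CStarAlgebra A]
    (S T : A) (hS : IsSelfAdjoint S) (hT : IsSelfAdjoint T) {z : ℂ}
    (hz : z ∈ spectrum ℂ S) :
    Metric.infDist z (spectrum ℂ T) ≤ ‖S - T‖ := by
  by_contra hcon
  push_neg at hcon
  set d := Metric.infDist z (spectrum ℂ T) with hd
  have hd0 : 0 < d := lt_of_le_of_lt (norm_nonneg _) hcon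
  have hnt : Nontrivial A := by
    by_contra hnt
    rw [not_nontrivial_iff_subsingleton] at hnt
    exact spectrum.notMem_iff.mpr (isUnit_of_subsingleton _) hz
  have hzT : z ∉ spectrum ℂ T := fun hmem => by
    have h0 := Metric.infDist_zero_of_mem hmem
    rw [← hd] at h0
    linarith
  have hu : IsUnit (algebraMap ℂ A z - T) := spectrum.notMem_iff.mp hzT
  set u : Aˣ := hu.unit with husp
  have huval : (u : A) = algebraMap ℂ A z - T := rfl
  have hzre : z = z.re := hS.mem_spectrum_eq_re hz
  have hstarz : star z = z := by
    rw [hzre]; exact Complex.conj_ofReal _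
  have huSA : IsSelfAdjoint (u : A) := by
    rw [huval, IsSelfAdjoint, star_sub, hT.star_eq, ← algebraMap_star_comm, hstarz]
  have huinvSA : IsSelfAdjoint ((u⁻¹ : Aˣ) : A) := by
    have h1 : (u : A) * star ((u⁻¹ : Aˣ) : A) = 1 := by
      calc (u : A) * star ((u⁻¹ : Aˣ) : A)
          = star (((u⁻¹ : Aˣ) : A) * star (u : A)) := by rw [star_mul, star_star]
        _ = star (((u⁻¹ : Aˣ) : A) * (u : A)) := by rw [huSA.star_eq]
        _ = 1 := by rw [Units.inv_mul]; exact star_one A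
    show star ((u⁻¹ : Aˣ) : A) = ((u⁻¹ : Aˣ) : A)
    calc star ((u⁻¹ : Aˣ) : A)
        = (((u⁻¹ : Aˣ) : A) * (u : A)) * star ((u⁻¹ : Aˣ) : A) := by
          rw [Units.inv_mul, one_mul]
      _ = ((u⁻¹ : Aˣ) : A) * ((u : A) * star ((u⁻¹ : Aˣ) : A)) := by rw [mul_assoc]
      _ = ((u⁻¹ : Aˣ) : A) := by rw [h1, mul_one]
  -- every element of the spectrum of `u⁻¹` has norm at most `d⁻¹`
  have hbound : ∀ μ ∈ spectrum ℂ ((u⁻¹ : Aˣ) : A), ‖μ‖ ≤ d⁻¹ := by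
    intro μ hμ
    have hμ0 : μ ≠ 0 := by
      intro h
      exact (spectrum.zero_notMem_iff ℂ).mpr (u⁻¹).isUnit (h ▸ hμ)
    have hinv : μ⁻¹ ∈ spectrum ℂ (u : A) := by
      have h2 := (spectrum.inv_mem_iff (r := Units.mk0 μ hμ0) (a := u⁻¹)).mp
      simp only [Units.val_mk0, Units.val_inv_eq_inv_val, inv_inv] at h2
      simpa using h2 hμ
    rw [huval, ← spectrum.singleton_sub_eq] at hinv
    obtain ⟨a, ha, b, hb, hab⟩ := Set.mem_sub.mp hinv
    rw [Set.mem_singleton_iff] at ha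
    subst ha
    have hdist : d ≤ ‖μ⁻¹‖ := by
      rw [← hab, hd]
      simpa [dist_eq_norm] using Metric.infDist_le_dist_of_mem hb
    have h3 : d ≤ ‖μ‖⁻¹ := by rwa [norm_inv] at hdist
    calc ‖μ‖ = (‖μ‖⁻¹)⁻¹ := by rw [inv_inv]
      _ ≤ d⁻¹ := by
          apply inv_anti₀ hd0 h3
  have hradius : spectralRadius ℂ ((u⁻¹ : Aˣ) : A) ≤ ENNReal.ofReal d⁻¹ := by
    refine iSup₂_le fun μ hμ => ?_
    rw [← enorm_eq_nnnorm, ← ofReal_norm]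
    exact ENNReal.ofReal_le_ofReal (hbound μ hμ)
  have hnorminv : ‖((u⁻¹ : Aˣ) : A)‖ ≤ d⁻¹ := by
    rw [huinvSA.spectralRadius_eq_nnnorm, ← enorm_eq_nnnorm, ← ofReal_norm] at hradius
    exact (ENNReal.ofReal_le_ofReal_iff (by positivity)).mp hradius
  have hpos : 0 < ‖((u⁻¹ : Aˣ) : A)‖ := Units.norm_pos u⁻¹
  have hfinal : ‖(algebraMap ℂ A z - S) - (u : A)‖ < ‖((u⁻¹ : Aˣ) : A)‖⁻¹ := by
    have h1 : (algebraMap ℂ A z - S) - (u : A) = T - S := by rw [huval]; abel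
    rw [h1, norm_sub_rev]
    calc ‖S - T‖ < d := hcon
      _ = (d⁻¹)⁻¹ := by rw [inv_inv]
      _ ≤ ‖((u⁻¹ : Aˣ) : A)‖⁻¹ := inv_anti₀ hpos hnorminv
  have : IsUnit (algebraMap ℂ A z - S) := (u.ofNearby _ hfinal).isUnit
  exact spectrum.notMem_iff.mpr this hz

/-- The Hausdorff distance between the spectra of two bounded self-adjoint
operators on a complex Hilbert space is at most the operator norm of their
difference. -/
theorem hausdorffDist_spectra_le
    {H : Type*} [NormedAddCommGroup H] [InnerProductSpace ℂ H] [CompleteSpace H]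
    (S T : H →L[ℂ] H) (hS : IsSelfAdjoint S) (hT : IsSelfAdjoint T) :
    Metric.hausdorffDist (spectrum ℂ S) (spectrum ℂ T) ≤ ‖S - T‖ := by
  refine Metric.hausdorffDist_le_of_infDist (norm_nonneg _)
    (fun z hz => infDist_spectrum_le_of_isSelfAdjoint S T hS hT hz)
    (fun z hz => ?_)
  rw [norm_sub_rev]
  exact infDist_spectrum_le_of_isSelfAdjoint T S hT hS hz
end

section
/- (Fredholm alternative) Let T be a compact bounded linear operator on a separable complex Hilbert space H. If the operator I − T is not boundedly invertible, then the equation x = Tx has a nonzero solution x ∈ H, i.e. 1 is an eigenvalue of T. -/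
open Metric Submodule

/-- Fredholm alternative: if `T` is a compact operator on a separable complex
Hilbert space and `I - T` is not boundedly invertible, then `x = Tx` has a
nonzero solution. -/
theorem fredholm_alternative
    {H : Type*} [NormedAddCommGroup H] [InnerProductSpace ℂ H] [CompleteSpace H]
    [TopologicalSpace.SeparableSpace H]
    (T : H →L[ℂ] H)
    (hT : IsCompact (closure (T '' Metric.closedBall 0 1)))
    (h : ¬IsUnit (1 - T)) :
    ∃ x : H, x ≠ 0 ∧ T x = x := by
  by_contra hcon
  push_neg at hcon
  set S : H →L[ℂ] H := 1 - T with hSdef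
  have hSx : ∀ x : H, S x = x - T x := fun x => rfl
  -- injectivity of S
  have hker : ∀ x : H, S x = 0 → x = 0 := by
    intro x hx
    by_contra h0
    exact hcon x h0 (by rw [hSx, sub_eq_zero] at hx; exact hx.symm)
  -- S is bounded below
  have hbb : ∃ c : ℝ, 0 < c ∧ ∀ x : H, c * ‖x‖ ≤ ‖S x‖ := by
    by_contra hb
    push_neg at hb
    have hseq : ∀ n : ℕ, ∃ u : H, ‖u‖ = 1 ∧ ‖S u‖ < 1 / (n + 1) := by
      intro n
      obtain ⟨x, hx⟩ := hb (1 / (n + 1)) (by positivity)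
      have hx0 : x ≠ 0 := by
        rintro rfl; simp at hx
      refine ⟨‖x‖⁻¹ • x, ?_, ?_⟩
      · rw [norm_smul, norm_inv, norm_norm, inv_mul_cancel₀ (norm_ne_zero_iff.mpr hx0)]
      · rw [S.map_smul_of_tower, norm_smul, norm_inv, norm_norm]
        calc ‖x‖⁻¹ * ‖S x‖ < ‖x‖⁻¹ * (1 / (n + 1) * ‖x‖) := by
              exact mul_lt_mul_of_pos_left hx (inv_pos.mpr (norm_pos_iff.mpr hx0))
          _ = 1 / (n + 1) := by
              rw [mul_comm (1 / ((n:ℝ) + 1)) ‖x‖, ← mul_assoc,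
                inv_mul_cancel₀ (norm_ne_zero_iff.mpr hx0), one_mul]
    choose u hu1 hu2 using hseq
    have humem : ∀ n : ℕ, T (u n) ∈ closure (T '' Metric.closedBall 0 1) := fun n =>
      subset_closure ⟨u n, by simp [mem_closedBall_zero_iff, (hu1 n).le], rfl⟩
    obtain ⟨a, _, φ, hφ, hconv⟩ := hT.tendsto_subseq humem
    have hS0 : Filter.Tendsto (fun n => S (u (φ n))) Filter.atTop (nhds 0) := by
      rw [tendsto_zero_iff_norm_tendsto_zero]
      refine squeeze_zero (fun n => norm_nonneg _) (fun n => (hu2 (φ n)).le.trans ?_)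
        tendsto_one_div_add_atTop_nhds_zero_nat
      gcongr
      exact_mod_cast hφ.le_apply
    have hua : Filter.Tendsto (fun n => u (φ n)) Filter.atTop (nhds a) := by
      have : (fun n => u (φ n)) = fun n => S (u (φ n)) + T (u (φ n)) := by
        funext n; rw [hSx]; abel
      rw [this]
      simpa using hS0.add hconv
    have ha1 : ‖a‖ = 1 := by
      have h1 : Filter.Tendsto (fun n => ‖u (φ n)‖) Filter.atTop (nhds ‖a‖) := hua.norm
      have h2 : (fun n => ‖u (φ n)‖) = fun _ => (1 : ℝ) := funext fun n => hu1 (φ n)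
      rw [h2] at h1
      exact tendsto_nhds_unique h1 tendsto_const_nhds
    have hSa : S a = 0 := by
      have h1 : Filter.Tendsto (fun n => S (u (φ n))) Filter.atTop (nhds (S a)) :=
        (S.continuous.tendsto a).comp hua
      exact tendsto_nhds_unique h1 hS0
    have := hker a hSa
    rw [this] at ha1; simp at ha1
  obtain ⟨c, hc, hbound⟩ := hbb
  -- powers of S are bounded below
  have hboundn : ∀ (n : ℕ) (x : H), c ^ n * ‖x‖ ≤ ‖(S ^ n) x‖ := by
    intro n
    induction n with
    | zero => simp
    | succ n ih =>
      intro x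
      calc c ^ (n + 1) * ‖x‖ = c ^ n * (c * ‖x‖) := by ring
        _ ≤ c ^ n * ‖S x‖ :=
            mul_le_mul_of_nonneg_left (hbound x) (pow_pos hc n).le
        _ ≤ ‖(S ^ n) (S x)‖ := ih (S x)
        _ = ‖(S ^ (n + 1)) x‖ := by rw [pow_succ, ContinuousLinearMap.mul_apply]
  have hanti : ∀ n : ℕ,
      AntilipschitzWith ⟨(c ^ n)⁻¹, (inv_nonneg.mpr (pow_pos hc n).le)⟩ (S ^ n) := by
    intro n
    apply ContinuousLinearMap.antilipschitz_of_bound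
    intro x
    show ‖x‖ ≤ (c ^ n)⁻¹ * ‖(S ^ n) x‖
    have h1 := hboundn n x
    have h2 : ‖x‖ = (c ^ n)⁻¹ * (c ^ n * ‖x‖) := by
      rw [← mul_assoc, inv_mul_cancel₀ (pow_pos hc n).ne', one_mul]
    rw [h2]
    exact mul_le_mul_of_nonneg_left h1 (inv_nonneg.mpr (pow_pos hc n).le)
  have hinjn : ∀ n : ℕ, Function.Injective (S ^ n) := fun n => (hanti n).injective
  have hclosed : ∀ n : ℕ, IsClosed ((LinearMap.range ((S ^ n : H →L[ℂ] H) : H →ₗ[ℂ] H) : Submodule ℂ H) : Set H) := by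
    intro n
    have h1 := (hanti n).isClosed_range (S ^ n).uniformContinuous
    have h2 : ((LinearMap.range ((S ^ n : H →L[ℂ] H) : H →ₗ[ℂ] H) : Submodule ℂ H) : Set H) = Set.range (S ^ n) := by
      ext x
      exact ⟨fun ⟨y, hy⟩ => ⟨y, hy⟩, fun ⟨y, hy⟩ => ⟨y, hy⟩⟩
    rw [h2]
    exact h1
  -- S is injective
  have hinj : Function.Injective S := fun a b hab =>
    sub_eq_zero.mp (hker _ (by rw [map_sub, hab, sub_self]))
  -- S is not surjective
  have hnsurj : ¬Function.Surjective S := fun hs =>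
    h (ContinuousLinearMap.isUnit_iff_bijective.mpr ⟨hinj, hs⟩)
  obtain ⟨y, hy⟩ : ∃ y : H, y ∉ LinearMap.range (S : H →ₗ[ℂ] H) := by
    by_contra hs
    push_neg at hs
    exact hnsurj fun z => by obtain ⟨w, hw⟩ := hs z; exact ⟨w, hw⟩
  set R : ℕ → Submodule ℂ H := fun n => LinearMap.range ((S ^ n : H →L[ℂ] H) : H →ₗ[ℂ] H) with hRdef
  have hRmono : ∀ {m n : ℕ}, n ≤ m → R m ≤ R n := by
    intro m n hnm
    rintro _ ⟨z, rfl⟩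
    exact ⟨(S ^ (m - n)) z, by
      rw [ContinuousLinearMap.coe_coe, ContinuousLinearMap.coe_coe, ← ContinuousLinearMap.mul_apply, ← pow_add, Nat.add_sub_cancel' hnm]⟩
  have hSy : ∀ n : ℕ, (S ^ n) y ∈ R n := fun n => ⟨y, rfl⟩
  have hSy' : ∀ n : ℕ, (S ^ n) y ∉ R (n + 1) := by
    intro n hmem
    obtain ⟨z, hz⟩ := hmem
    rw [pow_succ, ContinuousLinearMap.coe_coe, ContinuousLinearMap.mul_apply] at hz
    exact hy ⟨z, hinjn n hz⟩
  have hmapS : ∀ (n : ℕ) (x : H), x ∈ R n → S x ∈ R (n + 1) := by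
    rintro n _ ⟨z, rfl⟩
    exact ⟨z, by rw [pow_succ', ContinuousLinearMap.coe_coe, ContinuousLinearMap.coe_coe, ContinuousLinearMap.mul_apply]⟩
  -- choose orthonormal-ish unit vectors
  have hu : ∀ n : ℕ, ∃ u : H, ‖u‖ = 1 ∧ u ∈ R n ∧ u ∈ (R (n + 1))ᗮ := by
    intro n
    haveI : CompleteSpace (R (n + 1)) := (hclosed (n + 1)).completeSpace_coe
    set v := (S ^ n) y with hv
    set w := v - (orthogonalProjection (R (n + 1)) v : H) with hw
    have hw0 : w ≠ 0 := by
      intro h0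
      apply hSy' n
      have hveq : v = (orthogonalProjection (R (n + 1)) v : H) := by
        rwa [sub_eq_zero] at h0
      rw [← hv, hveq]
      exact (orthogonalProjection (R (n + 1)) v).2
    refine ⟨‖w‖⁻¹ • w, ?_, ?_, ?_⟩
    · rw [norm_smul, norm_inv, norm_norm, inv_mul_cancel₀ (norm_ne_zero_iff.mpr hw0)]
    · exact Submodule.smul_of_tower_mem _ _ (Submodule.sub_mem _ (hSy n)
        (hRmono (Nat.le_succ n) (orthogonalProjection (R (n + 1)) v).2))
    · exact Submodule.smul_of_tower_mem _ _ (sub_starProjection_mem_orthogonal (K := R (n + 1)) v)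
  choose u hu1 humem huort using hu
  -- key separation estimate
  have hkey : ∀ {n m : ℕ}, n < m → 1 ≤ ‖T (u n) - T (u m)‖ := by
    intro n m hnm
    set z := S (u n) + (u m - S (u m)) with hz
    have hwz : z ∈ R (n + 1) := by
      refine Submodule.add_mem _ (hmapS n _ (humem n)) (Submodule.sub_mem _ ?_ ?_)
      · exact hRmono hnm (humem m)
      · exact hRmono (by omega) (hmapS m _ (humem m))
    have hTT : T (u n) - T (u m) = u n - z := by
      rw [hz]
      have e1 : S (u n) = u n - T (u n) := hSx (u n)
      have e2 : S (u m) = u m - T (u m) := hSx (u m)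
      rw [e1, e2]; abel
    rw [hTT]
    have hiz : (inner ℂ (u n) z : ℂ) = 0 :=
      (Submodule.mem_orthogonal' _ _).1 (huort n) z hwz
    have hsq := norm_sub_sq (𝕜 := ℂ) (u n) z
    rw [hiz, map_zero] at hsq
    nlinarith [norm_nonneg (u n - z), sq_nonneg ‖z‖, hu1 n, hsq]
  -- contradiction with compactness
  have humem2 : ∀ n : ℕ, T (u n) ∈ closure (T '' Metric.closedBall 0 1) := fun n =>
    subset_closure ⟨u n, by simp [mem_closedBall_zero_iff, (hu1 n).le], rfl⟩
  obtain ⟨a, _, φ, hφ, hconv⟩ := hT.tendsto_subseq humem2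
  have hcauchy := hconv.cauchySeq
  rw [Metric.cauchySeq_iff] at hcauchy
  obtain ⟨N, hN⟩ := hcauchy 1 one_pos
  have h1 := hN N (le_refl N) (N + 1) (Nat.le_succ N)
  simp only [Function.comp_apply] at h1
  rw [dist_eq_norm] at h1
  have h2 := hkey (hφ (Nat.lt_succ_self N))
  linarith
end

section
/- (Riesz–Schauder) Let T be a compact bounded linear operator on a separable complex Hilbert space H. Then the spectrum σ(T) has no accumulation point in ℂ other than possibly 0 (equivalently, σ(T) \ {0} is discrete in ℂ \ {0}); moreover, for every nonzero λ ∈ σ(T), λ is an eigenvalue of T and the eigenspace E_λ = {x ∈ H : Tx = λx} is finite dimensional. -/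
open Metric Filter Topology Pointwise

section RS
variable {H : Type*} [NormedAddCommGroup H] [NormedSpace ℂ H]

/-- No uniformly separated image sequence under a compact operator. -/
lemma RS.no_sep (T : H →L[ℂ] H)
    (hT : IsCompact (closure (T '' Metric.closedBall 0 1)))
    {c : ℝ} (hc : 0 < c) (u : ℕ → H) (hu : ∀ n, ‖u n‖ ≤ 1)
    (hsep : ∀ m n : ℕ, m < n → c ≤ ‖T (u n) - T (u m)‖) : False := by
  have hmem : ∀ n, T (u n) ∈ closure (T '' Metric.closedBall 0 1) := fun n =>
    subset_closure ⟨u n, by simpa [Metric.mem_closedBall, dist_zero_right] using hu n, rfl⟩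
  obtain ⟨y, -, φ, hφ, hconv⟩ := hT.tendsto_subseq hmem
  have hcau := hconv.cauchySeq
  rw [Metric.cauchySeq_iff] at hcau
  obtain ⟨N, hN⟩ := hcau c hc
  have h1 := hN (N + 1) (by omega) N (by omega)
  have h2 := hsep (φ N) (φ (N + 1)) (hφ (by omega))
  rw [dist_eq_norm] at h1
  simp only [Function.comp] at h1
  linarith

/-- Riesz-lemma style unit vector in `Y` at distance `≥ 1/2` from `Z`. -/
lemma RS.riesz_unit {Y Z : Submodule ℂ H} (hZc : IsClosed (Z : Set H))
    (hlt : Z < Y) :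
    ∃ u : H, u ∈ Y ∧ ‖u‖ = 1 ∧ ∀ z ∈ Z, (1 : ℝ) / 2 ≤ ‖u - z‖ := by
  obtain ⟨v, hvY, hvZ⟩ := SetLike.exists_of_lt hlt
  set F : Submodule ℂ Y := Z.comap Y.subtype with hF
  have hFc : IsClosed (F : Set Y) := hZc.preimage continuous_subtype_val
  have hFex : ∃ x : Y, x ∉ F := ⟨⟨v, hvY⟩, by simpa [hF] using hvZ⟩
  obtain ⟨x₀, hx₀F, hx₀⟩ := riesz_lemma (𝕜 := ℂ) hFc hFex (r := 1/2) (by norm_num)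
  have hx₀ne : x₀ ≠ 0 := fun h => hx₀F (h ▸ F.zero_mem)
  have hn : ‖x₀‖ ≠ 0 := norm_ne_zero_iff.mpr hx₀ne
  set a : ℂ := (‖x₀‖ : ℂ) with ha
  have hane : a ≠ 0 := by simpa [ha] using hn
  refine ⟨a⁻¹ • (x₀ : H), Y.smul_mem _ x₀.2, ?_, ?_⟩
  · have hcoe : ‖(x₀ : H)‖ = ‖x₀‖ := rfl
    rw [norm_smul]
    have : ‖a⁻¹‖ = ‖x₀‖⁻¹ := by simp [ha]
    rw [this, hcoe]
    exact inv_mul_cancel₀ hn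
  · intro z hz
    have hzY : z ∈ Y := hlt.le hz
    have hmemF : a • (⟨z, hzY⟩ : Y) ∈ F := by
      simpa [hF] using Z.smul_mem a hz
    have := hx₀ _ hmemF
    have hrw : a⁻¹ • (x₀ : H) - z = a⁻¹ • ((x₀ : H) - a • z) := by
      rw [smul_sub, inv_smul_smul₀ hane]
    rw [hrw, norm_smul]
    have hnorm : ‖(x₀ : H) - a • z‖ = ‖x₀ - a • (⟨z, hzY⟩ : Y)‖ := rfl
    have haa : ‖a⁻¹‖ = ‖x₀‖⁻¹ := by simp [ha]
    rw [haa, hnorm]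
    calc (1:ℝ)/2 = ‖x₀‖⁻¹ * ‖x₀‖ * (1/2) := by rw [inv_mul_cancel₀ hn, one_mul]
      _ = ‖x₀‖⁻¹ * (1/2 * ‖x₀‖) := by ring
      _ ≤ ‖x₀‖⁻¹ * ‖x₀ - a • (⟨z, hzY⟩ : Y)‖ := by
          apply mul_le_mul_of_nonneg_left (hx₀ _ hmemF) (by positivity)

/-- A nonzero approximate eigenvalue of a compact operator is an eigenvalue. -/
lemma RS.eigen_of_approx (T : H →L[ℂ] H)
    (hT : IsCompact (closure (T '' Metric.closedBall 0 1)))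
    {lam : ℂ} (hlam : lam ≠ 0)
    (h : ∀ ε : ℝ, 0 < ε → ∃ x : H, ‖x‖ = 1 ∧ ‖lam • x - T x‖ < ε) :
    ∃ x : H, x ≠ 0 ∧ T x = lam • x := by
  have hx : ∀ n : ℕ, ∃ x : H, ‖x‖ = 1 ∧ ‖lam • x - T x‖ < 1 / (n + 1) :=
    fun n => h _ (by positivity)
  choose x hx1 hx2 using hx
  have hmem : ∀ n, T (x n) ∈ closure (T '' Metric.closedBall 0 1) := fun n =>
    subset_closure ⟨x n, by simp [Metric.mem_closedBall, dist_zero_right, (hx1 n).le], rfl⟩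
  obtain ⟨y, -, φ, hφ, hconv⟩ := hT.tendsto_subseq hmem
  -- lam • x (φ n) → y
  have hdiff : Tendsto (fun n => lam • x (φ n) - T (x (φ n))) atTop (𝓝 0) := by
    rw [tendsto_zero_iff_norm_tendsto_zero]
    apply squeeze_zero (fun n => by positivity) (fun n => ?_)
      (tendsto_one_div_add_atTop_nhds_zero_nat.comp hφ.tendsto_atTop)
    simpa using (hx2 (φ n)).le
  have hlx : Tendsto (fun n => lam • x (φ n)) atTop (𝓝 y) := by
    have := hdiff.add hconv
    simpa using this
  have hxlim : Tendsto (fun n => x (φ n)) atTop (𝓝 (lam⁻¹ • y)) := by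
    have := hlx.const_smul lam⁻¹
    simpa [inv_smul_smul₀ hlam] using this
  have hTy : T (lam⁻¹ • y) = y := by
    have h1 : Tendsto (fun n => T (x (φ n))) atTop (𝓝 (T (lam⁻¹ • y))) :=
      (T.continuous.tendsto _).comp hxlim
    exact tendsto_nhds_unique h1 hconv
  have hynorm : ‖lam⁻¹ • y‖ = 1 := by
    have := (continuous_norm.tendsto _).comp hxlim
    have h2 : Tendsto (fun n => ‖x (φ n)‖) atTop (𝓝 1) := by
      simp only [hx1]; exact tendsto_const_nhds (x := (1:ℝ)) (f := atTop (α := ℕ))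
    exact tendsto_nhds_unique (by simpa [Function.comp_def] using this) h2

  refine ⟨lam⁻¹ • y, fun h0 => by simp [h0] at hynorm, ?_⟩
  rw [hTy, smul_inv_smul₀ hlam]

/-- Every nonzero spectral value of a compact operator is an eigenvalue. -/
lemma RS.exists_eigenvector [CompleteSpace H] (T : H →L[ℂ] H)
    (hT : IsCompact (closure (T '' Metric.closedBall 0 1)))
    {lam : ℂ} (hmem : lam ∈ spectrum ℂ T) (hlam : lam ≠ 0) :
    ∃ x : H, x ≠ 0 ∧ T x = lam • x := by
  by_contra hno
  push_neg at hno
  set S : H →L[ℂ] H := lam • ContinuousLinearMap.id ℂ H - T with hS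
  have hSapp : ∀ x : H, S x = lam • x - T x := fun x => rfl
  -- S is injective
  have hinj : ∀ x : H, S x = 0 → x = 0 := by
    intro x hx
    by_contra hx0
    exact hno x hx0 (by rw [hSapp, sub_eq_zero] at hx; exact hx.symm)
  -- S is bounded below
  obtain ⟨c, hc, hbdd⟩ : ∃ c : ℝ, 0 < c ∧ ∀ x : H, c * ‖x‖ ≤ ‖S x‖ := by
    by_contra hcon
    push_neg at hcon
    have happrox : ∀ ε : ℝ, 0 < ε → ∃ x : H, ‖x‖ = 1 ∧ ‖lam • x - T x‖ < ε := by
      intro ε hε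
      obtain ⟨x, hx⟩ := hcon ε hε
      have hxne : x ≠ 0 := by
        intro h0; rw [h0] at hx; simp at hx
      have hxn : (0:ℝ) < ‖x‖ := norm_pos_iff.mpr hxne
      refine ⟨‖x‖⁻¹ • x, ?_, ?_⟩
      · rw [norm_smul]; simp [inv_mul_cancel₀ hxn.ne']
      · have : lam • (‖x‖⁻¹ • x) - T (‖x‖⁻¹ • x) = ‖x‖⁻¹ • S x := by
          rw [hSapp, smul_sub, smul_comm]; simp
        rw [this, norm_smul]
        simp only [norm_inv, norm_norm]
        rw [inv_mul_lt_iff₀ hxn]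
        calc ‖S x‖ < ε * ‖x‖ := hx
          _ = ‖x‖ * ε := mul_comm _ _
    obtain ⟨x, hx0, hxeig⟩ := RS.eigen_of_approx T hT hlam happrox
    exact hno x hx0 hxeig
  -- S is antilipschitz
  have hanti : AntilipschitzWith (⟨c, hc.le⟩ : NNReal)⁻¹ S := by
    apply AddMonoidHomClass.antilipschitz_of_bound
    intro x
    show ‖x‖ ≤ c⁻¹ * ‖S x‖
    rw [le_inv_mul_iff₀ (by exact_mod_cast hc)]
    exact_mod_cast hbdd x
  -- S maps closed submodules to closed submodules
  have hclosed_map : ∀ Y : Submodule ℂ H, IsClosed (Y : Set H) →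
      IsClosed ((Y.map (S : H →ₗ[ℂ] H)) : Set H) := by
    intro Y hYc
    haveI : CompleteSpace Y := hYc.completeSpace_coe
    have hanti' : AntilipschitzWith (⟨c, hc.le⟩ : NNReal)⁻¹ (fun y : Y => S (y : H)) := by
      intro a b
      have := hanti (a : H) (b : H)
      simpa [edist_comm, Subtype.edist_eq] using this
    have hcl : IsClosed (Set.range (fun y : Y => S (y : H))) :=
      hanti'.isClosed_range (S.uniformContinuous.comp uniformContinuous_subtype_val)
    have : Set.range (fun y : Y => S (y : H)) = ((Y.map (S : H →ₗ[ℂ] H)) : Set H) := by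
      ext w
      simp [Submodule.mem_map, Set.range, SetLike.mem_coe]
    rwa [this] at hcl
  -- S is not surjective (else lam ∉ spectrum)
  have hnotsurj : LinearMap.range (S : H →ₗ[ℂ] H) ≠ ⊤ := by
    intro hsurj
    have hker : LinearMap.ker (S : H →ₗ[ℂ] H) = ⊥ := by
      rw [LinearMap.ker_eq_bot']
      intro x hx
      exact hinj x hx
    set e : H ≃L[ℂ] H := ContinuousLinearEquiv.ofBijective S hker hsurj with he
    have hee : ∀ y : H, e y = S y := fun y =>
      congrFun (ContinuousLinearEquiv.coeFn_ofBijective S hker hsurj) y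
    have hunit : IsUnit ((algebraMap ℂ (H →L[ℂ] H)) lam - T) := by
      have halg : (algebraMap ℂ (H →L[ℂ] H)) lam - T = S := by
        rw [hS, Algebra.algebraMap_eq_smul_one]
        rfl
      rw [halg]
      refine ⟨⟨S, e.symm.toContinuousLinearMap, ?_, ?_⟩, rfl⟩
      · ext x
        simp only [ContinuousLinearMap.mul_apply, ContinuousLinearMap.one_apply,
          ContinuousLinearEquiv.coe_coe]
        rw [← hee, e.apply_symm_apply]
      · ext x
        simp only [ContinuousLinearMap.mul_apply, ContinuousLinearMap.one_apply,
          ContinuousLinearEquiv.coe_coe]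
        rw [← hee, e.symm_apply_apply]
    exact spectrum.notMem_iff.mpr hunit hmem
  -- the decreasing chain of subspaces
  set Y : ℕ → Submodule ℂ H := fun n => (Submodule.map (S : H →ₗ[ℂ] H))^[n] ⊤ with hY
  have hY0 : Y 0 = ⊤ := rfl
  have hYsucc : ∀ n, Y (n + 1) = (Y n).map (S : H →ₗ[ℂ] H) := by
    intro n
    rw [hY]
    simp [Function.iterate_succ_apply']
  have hYclosed : ∀ n, IsClosed (Y n : Set H) := by
    intro n
    induction n with
    | zero => rw [hY0]; exact isClosed_univ
    | succ n ih => rw [hYsucc]; exact hclosed_map _ ih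
  have hSinj : Function.Injective (S : H →ₗ[ℂ] H) := by
    intro a b hab
    have : S (a - b) = 0 := by simp only [map_sub]; rw [sub_eq_zero]; exact hab
    exact sub_eq_zero.mp (hinj _ this)
  have hYlt : ∀ n, Y (n + 1) < Y n := by
    intro n
    induction n with
    | zero =>
      rw [hYsucc, hY0]
      refine lt_of_le_of_ne le_top ?_
      rw [Submodule.map_top]
      intro h
      exact hnotsurj (by rw [← h])
    | succ n ih =>
      rw [hYsucc (n+1), hYsucc n]
      rw [hYsucc n] at ih
      exact Submodule.map_strictMono_of_injective hSinj ih
  have hYle : ∀ m n : ℕ, m ≤ n → Y n ≤ Y m := by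
    intro m n hmn
    exact antitone_nat_of_succ_le (fun k => (hYlt k).le) hmn
  -- Riesz sequence
  have hu : ∀ n : ℕ, ∃ u : H, u ∈ Y n ∧ ‖u‖ = 1 ∧ ∀ z ∈ Y (n+1), (1:ℝ)/2 ≤ ‖u - z‖ :=
    fun n => RS.riesz_unit (hYclosed (n+1)) (hYlt n)
  choose u huY hunorm husep using hu
  -- separation estimate
  have hlampos : (0:ℝ) < ‖lam‖ := norm_pos_iff.mpr hlam
  refine RS.no_sep T hT (c := ‖lam‖ / 2) (by linarith) u (fun n => (hunorm n).le) ?_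
  intro m n hmn
  rw [norm_sub_rev]
  set w : H := S (u m) - S (u n) + lam • (u n) with hw
  have hwmem : w ∈ Y (m + 1) := by
    have h1 : S (u m) ∈ Y (m + 1) := by
      rw [hYsucc]
      exact Submodule.mem_map_of_mem (huY m)
    have h2 : S (u n) ∈ Y (m + 1) := by
      apply hYle (m+1) (n+1) (by omega)
      rw [hYsucc]
      exact Submodule.mem_map_of_mem (huY n)
    have h3 : lam • (u n) ∈ Y (m + 1) := by
      apply hYle (m+1) n (by omega)
      exact Submodule.smul_mem _ _ (huY n)
    exact Submodule.add_mem _ (Submodule.sub_mem _ h1 h2) h3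
  have hrw : T (u m) - T (u n) = lam • (u m - lam⁻¹ • w) := by
    rw [smul_sub, smul_inv_smul₀ hlam, hw, hSapp, hSapp]
    abel
  rw [hrw, norm_smul]
  have hsep := husep m (lam⁻¹ • w) (Submodule.smul_mem _ _ hwmem)
  calc ‖lam‖ / 2 = ‖lam‖ * (1/2) := by ring
    _ ≤ ‖lam‖ * ‖u m - lam⁻¹ • w‖ :=
        mul_le_mul_of_nonneg_left hsep (norm_nonneg _)

/-- Eigenspaces for nonzero eigenvalues of a compact operator are finite dimensional. -/
lemma RS.findim_eigenspace (T : H →L[ℂ] H)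
    (hT : IsCompact (closure (T '' Metric.closedBall 0 1)))
    {lam : ℂ} (hlam : lam ≠ 0) :
    FiniteDimensional ℂ (Module.End.eigenspace (T : H →ₗ[ℂ] H) lam) := by
  set E := Module.End.eigenspace (T : H →ₗ[ℂ] H) lam with hE
  have hEmem : ∀ x : H, x ∈ E ↔ T x = lam • x := by
    intro x
    rw [hE, Module.End.mem_eigenspace_iff]
    rfl
  set B : Set H := (E : Set H) ∩ Metric.closedBall 0 1 with hB
  -- B is compact
  have hBc : IsCompact B := by
    have hK' : IsCompact (lam⁻¹ • closure (T '' Metric.closedBall 0 1)) :=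
      hT.smul lam⁻¹
    apply hK'.of_isClosed_subset
    · apply IsClosed.inter ?_ Metric.isClosed_closedBall
      have : (E : Set H) = {x : H | T x = lam • x} := by
        ext x; exact hEmem x
      rw [this]
      exact isClosed_eq T.continuous (continuous_id.const_smul lam)
    · rintro x ⟨hxE, hxb⟩
      refine ⟨T x, subset_closure ⟨x, hxb, rfl⟩, ?_⟩
      simp [(hEmem x).mp hxE, inv_smul_smul₀ hlam]
  -- transfer to the subtype
  haveI : FiniteDimensional ℂ E := by
    apply FiniteDimensional.of_isCompact_closedBall₀ (𝕜 := ℂ) (r := 1) one_pos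
    have himg : (Subtype.val : E → H) '' Metric.closedBall 0 1 = B := by
      ext x
      constructor
      · rintro ⟨⟨y, hy⟩, hyb, rfl⟩
        exact ⟨hy, by simpa [Metric.mem_closedBall, dist_zero_right] using hyb⟩
      · rintro ⟨hxE, hxb⟩
        exact ⟨⟨x, hxE⟩, by simpa [Metric.mem_closedBall, dist_zero_right] using hxb, rfl⟩
    rw [Topology.IsEmbedding.subtypeVal.isCompact_iff, himg]
    exact hBc
  exact this

/-- The spectrum of a compact operator has no nonzero accumulation point. -/
lemma RS.not_accPt [CompleteSpace H] (T : H →L[ℂ] H)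
    (hT : IsCompact (closure (T '' Metric.closedBall 0 1)))
    {z : ℂ} (hz : z ≠ 0) : ¬AccPt z (Filter.principal (spectrum ℂ T)) := by
  intro hacc
  have hzpos : (0:ℝ) < ‖z‖ := norm_pos_iff.mpr hz
  have key : ∀ r : ℝ, 0 < r → ∃ w : ℂ, w ∈ spectrum ℂ T ∧ w ≠ z ∧ dist w z < r := by
    intro r hr
    obtain ⟨y, hy, hyne⟩ := accPt_iff_nhds.mp hacc (Metric.ball z r) (Metric.ball_mem_nhds _ hr)
    exact ⟨y, hy.2, hyne, Metric.mem_ball.mp hy.1⟩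
  set A := {w : ℂ // w ∈ spectrum ℂ T ∧ w ≠ z ∧ dist w z < ‖z‖/2} with hA
  have hstep : ∀ a : A, ∃ b : A, dist (b.1) z < dist (a.1) z := by
    intro a
    obtain ⟨w, h1, h2, h3⟩ := key (min (dist a.1 z) (‖z‖/2))
      (lt_min (dist_pos.mpr a.2.2.1) (by linarith))
    exact ⟨⟨w, h1, h2, lt_of_lt_of_le h3 (min_le_right _ _)⟩,
      lt_of_lt_of_le h3 (min_le_left _ _)⟩
  choose step hstepd using hstep
  obtain ⟨w0, h01, h02, h03⟩ := key (‖z‖/2) (by linarith)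
  set f : ℕ → A := fun n => step^[n] ⟨w0, h01, h02, h03⟩ with hf
  have hfd : ∀ n, dist ((f (n+1)).1) z < dist ((f n).1) z := by
    intro n
    have h : f (n+1) = step (f n) := Function.iterate_succ_apply' step _ _
    rw [h]; exact hstepd (f n)
  have hanti : StrictAnti (fun n => dist ((f n).1) z) := strictAnti_nat_of_succ_lt hfd
  have hfinj : Function.Injective (fun n => (f n).1) := by
    intro m n hmn
    by_contra hne
    rcases lt_or_gt_of_ne hne with h | h
    · exact absurd (congrArg (fun w => dist w z) hmn) (hanti h).ne'
    · exact absurd (congrArg (fun w => dist w z) hmn) (hanti h).ne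
  have hnorm : ∀ n, ‖z‖/2 < ‖(f n).1‖ := by
    intro n
    have h := (f n).2.2.2
    have h2 : ‖z‖ - ‖(f n).1‖ ≤ dist ((f n).1) z := by
      rw [dist_eq_norm, norm_sub_rev]
      exact norm_sub_norm_le _ _
    linarith
  have hfne : ∀ n, (f n).1 ≠ 0 := by
    intro n h0
    have := hnorm n
    rw [h0, norm_zero] at this
    linarith
  -- eigenvectors
  have hex : ∀ n, ∃ x : H, x ≠ 0 ∧ T x = (f n).1 • x :=
    fun n => RS.exists_eigenvector T hT (f n).2.1 (hfne n)
  choose x hx0 hxeig using hex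
  have hli : LinearIndependent ℂ x :=
    Module.End.eigenvectors_linearIndependent' (T : H →ₗ[ℂ] H) (fun n => (f n).1) hfinj x
      (fun n => ⟨Module.End.mem_eigenspace_iff.mpr (hxeig n), hx0 n⟩)
  -- increasing chain of spans
  set Y : ℕ → Submodule ℂ H := fun n => Submodule.span ℂ (x '' Set.Iio n) with hYdef
  haveI hfin : ∀ n, FiniteDimensional ℂ (Y n) :=
    fun n => FiniteDimensional.span_of_finite ℂ ((Set.finite_Iio n).image x)
  have hclosed : ∀ n, IsClosed ((Y n) : Set H) :=
    fun n => (Y n).closed_of_finiteDimensional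
  have hle : ∀ n, Y n ≤ Y (n+1) :=
    fun n => Submodule.span_mono (Set.image_mono
      (fun i hi => Set.mem_Iio.mpr (lt_trans (Set.mem_Iio.mp hi) (Nat.lt_succ_self n))))
  have hmono : Monotone Y := monotone_nat_of_le_succ hle
  have hlt : ∀ n, Y n < Y (n+1) := by
    intro n
    refine lt_of_le_of_ne (hle n) (fun heq => ?_)
    have hmem : x n ∈ Y (n+1) := Submodule.subset_span ⟨n, by simp, rfl⟩
    rw [← heq] at hmem
    exact hli.notMem_span_image (by simp) hmem
  have hriesz : ∀ n, ∃ u : H, u ∈ Y (n+1) ∧ ‖u‖ = 1 ∧ ∀ w ∈ Y n, (1:ℝ)/2 ≤ ‖u - w‖ :=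
    fun n => RS.riesz_unit (hclosed n) (hlt n)
  choose u huY hunorm husep using hriesz
  -- invariance
  have hTY : ∀ n, ∀ v ∈ Y n, T v ∈ Y n := by
    intro n v hv
    have : Submodule.map (T : H →ₗ[ℂ] H) (Y n) ≤ Y n := by
      rw [hYdef, Submodule.map_span_le]
      rintro m ⟨i, hi, rfl⟩
      rw [show (T : H →ₗ[ℂ] H) (x i) = T (x i) from rfl, hxeig i]
      exact Submodule.smul_mem _ _ (Submodule.subset_span ⟨i, hi, rfl⟩)
    exact this (Submodule.mem_map_of_mem hv)
  have hSY : ∀ n, ∀ v ∈ Y (n+1), (f n).1 • v - T v ∈ Y n := by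
    intro n v hv
    set L : H →ₗ[ℂ] H := (f n).1 • LinearMap.id - (T : H →ₗ[ℂ] H) with hL
    have hLapp : ∀ w : H, L w = (f n).1 • w - T w := fun w => rfl
    have : Submodule.map L (Y (n+1)) ≤ Y n := by
      rw [hYdef, Submodule.map_span_le]
      rintro m ⟨i, hi, rfl⟩
      rw [hLapp, hxeig i, ← sub_smul]
      rcases Nat.lt_or_ge i n with hin | hin
      · exact Submodule.smul_mem _ _ (Submodule.subset_span ⟨i, hin, rfl⟩)
      · have : i = n := by
          simp only [Set.mem_Iio] at hi
          omega
        rw [this, sub_self, zero_smul]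
        exact Submodule.zero_mem _
    rw [← hLapp]
    exact this (Submodule.mem_map_of_mem hv)
  -- separation estimate and contradiction
  refine RS.no_sep T hT (c := ‖z‖/2 * (1/2)) (by linarith) u (fun n => (hunorm n).le) ?_
  intro m n hmn
  set lamn : ℂ := (f n).1 with hlamn
  set w : H := (lamn • u n - T (u n)) + T (u m) with hw
  have hwY : w ∈ Y n := by
    apply Submodule.add_mem
    · exact hSY n (u n) (huY n)
    · exact hmono (by omega : m + 1 ≤ n) (hTY (m+1) (u m) (huY m))
  have hrw : T (u n) - T (u m) = lamn • (u n - lamn⁻¹ • w) := by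
    rw [smul_sub, smul_inv_smul₀ (hfne n), hw]
    abel
  rw [hrw, norm_smul]
  have hs := husep n (lamn⁻¹ • w) (Submodule.smul_mem _ _ hwY)
  have hn := hnorm n
  calc ‖z‖/2 * (1/2) ≤ ‖lamn‖ * (1/2) := by
        apply mul_le_mul_of_nonneg_right (le_of_lt hn) (by norm_num)
    _ ≤ ‖lamn‖ * ‖u n - lamn⁻¹ • w‖ :=
        mul_le_mul_of_nonneg_left hs (norm_nonneg _)

end RS

/-- Riesz–Schauder theorem: the spectrum of a compact operator on a separable
complex Hilbert space can accumulate only at `0`; every nonzero spectral value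
is an eigenvalue with finite dimensional eigenspace. -/
theorem riesz_schauder
    {H : Type*} [NormedAddCommGroup H] [InnerProductSpace ℂ H] [CompleteSpace H]
    [TopologicalSpace.SeparableSpace H]
    (T : H →L[ℂ] H)
    (hT : IsCompact (closure (T '' Metric.closedBall 0 1))) :
    (∀ z : ℂ, z ≠ 0 → ¬AccPt z (Filter.principal (spectrum ℂ T))) ∧
    ∀ lam ∈ spectrum ℂ T, lam ≠ 0 →
      (∃ x : H, x ≠ 0 ∧ T x = lam • x) ∧
      FiniteDimensional ℂ (Module.End.eigenspace T.toLinearMap lam) := by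
  refine ⟨fun z hz => RS.not_accPt T hT hz, fun lam hmem hlam => ?_⟩
  exact ⟨RS.exists_eigenvector T hT hmem hlam, RS.findim_eigenspace T hT hlam⟩
end

section
/- Let Ω ⊆ ℂ be open, X a complex Banach space, and f : Ω → X. If f is weakly holomorphic, i.e. for every continuous linear functional ℓ ∈ X* the function z ↦ ℓ(f(z)) is holomorphic on Ω, then f is holomorphic on Ω in the norm sense: the limit f′(z) = lim_{h→0} (f(z+h) − f(z))/h exists in X for every z ∈ Ω. Moreover, for each z₀ ∈ Ω and each r > 0 with the open disc B(z₀,r) contained in Ω, there exist coefficients aₙ ∈ X such that f(z) = Σ_{n≥0} aₙ (z − z₀)ⁿ with the series converging in X for |z − z₀| < r. -/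
open Metric Set Filter Complex
open scoped Topology ENNReal NNReal

/-- Weakly holomorphic functions are differentiable at every point of `Ω`. -/
lemma weakly_holo_differentiableAt
    {X : Type*} [NormedAddCommGroup X] [NormedSpace ℂ X] [CompleteSpace X]
    (Ω : Set ℂ) (hΩ : IsOpen Ω) (f : ℂ → X)
    (hf : ∀ ℓ : X →L[ℂ] ℂ, DifferentiableOn ℂ (fun z => ℓ (f z)) Ω) :
    ∀ z ∈ Ω, DifferentiableAt ℂ f z := by
  intro z₀ hz₀
  obtain ⟨R, hR0, hRΩ⟩ : ∃ R > 0, closedBall z₀ R ⊆ Ω := by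
    simpa using Metric.nhds_basis_closedBall.mem_iff.mp (hΩ.mem_nhds hz₀)
  have hballΩ : ball z₀ R ⊆ Ω := ball_subset_closedBall.trans hRΩ
  -- Step 1: local boundedness via Banach–Steinhaus
  obtain ⟨M, hM0, hM⟩ : ∃ M, 0 ≤ M ∧ ∀ z ∈ closedBall z₀ R, ‖f z‖ ≤ M := by
    obtain ⟨C, hC⟩ := banach_steinhaus (𝕜 := ℂ) (𝕜₂ := ℂ)
      (g := fun z : closedBall z₀ R => NormedSpace.inclusionInDoubleDual ℂ X (f z))
      (fun ℓ => by
        obtain ⟨C, hC⟩ := (isCompact_closedBall z₀ R).exists_bound_of_continuousOn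
          (((hf ℓ).continuousOn).mono hRΩ)
        exact ⟨C, fun z => hC z z.2⟩)
    refine ⟨max C 0, le_max_right _ _, fun z hz => ?_⟩
    have h1 := hC ⟨z, hz⟩
    have h2 : ‖(NormedSpace.inclusionInDoubleDual ℂ X) (f z)‖ = ‖f z‖ :=
      (NormedSpace.inclusionInDoubleDualLi ℂ (E := X)).norm_map (f z)
    rw [h2] at h1
    exact h1.trans (le_max_left _ _)
  set L : ℝ := 64 * M / R ^ 2 with hL
  have hL0 : 0 ≤ L := by positivity
  set s : Set ℂ := ball z₀ (R / 8) \ {z₀} with hs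
  -- Step 2: the key uniform Lipschitz estimate for difference quotients
  have key : ∀ w₁ ∈ s, ∀ w₂ ∈ s,
      ‖slope f z₀ w₁ - slope f z₀ w₂‖ ≤ L * ‖w₁ - w₂‖ := by
    intro w₁ hw₁ w₂ hw₂
    refine NormedSpace.norm_le_dual_bound ℂ _ (by positivity) fun ℓ => ?_
    set g : ℂ → ℂ := fun z => ℓ (f z) with hg
    have hgd : DifferentiableOn ℂ g (ball z₀ R) := (hf ℓ).mono hballΩ
    have hgb : ∀ w ∈ closedBall z₀ R, ‖g w‖ ≤ M * ‖ℓ‖ := fun w hw =>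
      (ℓ.le_opNorm (f w)).trans (by
        have := hM w hw
        nlinarith [norm_nonneg ℓ, norm_nonneg (f w)])
    set d : ℂ → ℂ := dslope g z₀ with hd
    have hdd : DifferentiableOn ℂ d (ball z₀ R) :=
      (differentiableOn_dslope (isOpen_ball.mem_nhds (mem_ball_self hR0))).mpr hgd
    -- bound d on relevant spheres, hence its derivative on the small ball
    have hderiv : ∀ w ∈ ball z₀ (R / 8),
        ‖deriv d w‖ ≤ 16 * (M * ‖ℓ‖) / R / (R / 4) := by
      intro w hw
      have hsub : closedBall w (R / 4) ⊆ ball z₀ R := by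
        intro x hx
        have h1 : dist x w ≤ R / 4 := mem_closedBall.mp hx
        have h2 : dist w z₀ < R / 8 := mem_ball.mp hw
        have := dist_triangle x w z₀
        simp only [mem_ball]
        linarith
      rw [← cderiv_eq_deriv isOpen_ball hdd (by positivity) hsub]
      apply norm_cderiv_le (by positivity)
      intro x hx
      have hxw : dist x w = R / 4 := mem_sphere.mp hx
      have h2 : dist w z₀ < R / 8 := mem_ball.mp hw
      have hxz : R / 8 ≤ dist x z₀ := by
        have := dist_triangle x z₀ w
        have h3 : dist z₀ w = dist w z₀ := dist_comm _ _
        linarith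
      have hxz' : dist x z₀ ≤ R := by
        have := dist_triangle x w z₀
        linarith
      have hxne : x ≠ z₀ := by
        intro h; rw [h] at hxz; simp at hxz; linarith
      rw [hd, dslope_of_ne _ hxne]
      have hnorm : ‖slope g z₀ x‖ = ‖x - z₀‖⁻¹ * ‖g x - g z₀‖ := by
        rw [slope, vsub_eq_sub, norm_smul, norm_inv]
      rw [hnorm]
      have hxz₀ : R / 8 ≤ ‖x - z₀‖ := by rwa [← dist_eq_norm]
      have hb1 : ‖g x - g z₀‖ ≤ 2 * (M * ‖ℓ‖) := by
        have := hgb x (mem_closedBall.mpr hxz')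
        have := hgb z₀ (mem_closedBall_self (le_of_lt hR0))
        have := norm_sub_le (g x) (g z₀)
        linarith
      have hinv : ‖x - z₀‖⁻¹ ≤ (R / 8)⁻¹ := by
        apply inv_anti₀ (by positivity) hxz₀
      have hM' : 0 ≤ M * ‖ℓ‖ := by positivity
      calc ‖x - z₀‖⁻¹ * ‖g x - g z₀‖ ≤ (R / 8)⁻¹ * (2 * (M * ‖ℓ‖)) := by
            apply mul_le_mul hinv hb1 (norm_nonneg _) (by positivity)
        _ = 16 * (M * ‖ℓ‖) / R := by field_simp; ring
    have hmono : ball z₀ (R / 8) ⊆ ball z₀ R :=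
      ball_subset_ball (by linarith)
    have hlip := (convex_ball z₀ (R / 8)).norm_image_sub_le_of_norm_deriv_le
      (f := d)
      (fun x hx => hdd.differentiableAt (isOpen_ball.mem_nhds (hmono hx)))
      hderiv hw₂.1 hw₁.1
    have hval : ℓ (slope f z₀ w₁ - slope f z₀ w₂) = d w₁ - d w₂ := by
      have e1 : w₁ ≠ z₀ := fun h => hw₁.2 (by simp [h])
      have e2 : w₂ ≠ z₀ := fun h => hw₂.2 (by simp [h])
      rw [map_sub, hd, dslope_of_ne _ e1, dslope_of_ne _ e2]
      simp [slope, hg, map_smul, map_sub]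
    rw [hval]
    refine hlip.trans (le_of_eq ?_)
    rw [hL]
    field_simp
    ring
  -- Step 3: Cauchy criterion and completeness give the derivative
  have hCauchy : Cauchy (Filter.map (slope f z₀) (𝓝[≠] z₀)) := by
    rw [Metric.cauchy_iff]
    refine ⟨Filter.map_neBot, fun ε hε => ?_⟩
    set δ : ℝ := min (R / 8) (ε / (2 * L + 1)) with hδ
    have hδ0 : 0 < δ := lt_min (by positivity) (by positivity)
    refine ⟨slope f z₀ '' ({z₀}ᶜ ∩ ball z₀ δ), Filter.image_mem_map
      (inter_mem_nhdsWithin _ (ball_mem_nhds _ hδ0)), ?_⟩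
    rintro x ⟨w₁, hw₁, rfl⟩ y ⟨w₂, hw₂, rfl⟩
    have hδR : δ ≤ R / 8 := min_le_left _ _
    have hmem : ∀ w : ℂ, w ∈ {z₀}ᶜ ∩ ball z₀ δ → w ∈ s := fun w hw =>
      ⟨ball_subset_ball hδR hw.2, hw.1⟩
    have hk := key w₁ (hmem _ hw₁) w₂ (hmem _ hw₂)
    have hd1 : ‖w₁ - z₀‖ < δ := by rw [← dist_eq_norm]; exact mem_ball.mp hw₁.2
    have hd2 : ‖w₂ - z₀‖ < δ := by rw [← dist_eq_norm]; exact mem_ball.mp hw₂.2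
    have htri : ‖w₁ - w₂‖ ≤ ‖w₁ - z₀‖ + ‖w₂ - z₀‖ := by
      have := norm_sub_le (w₁ - z₀) (w₂ - z₀)
      simpa using this
    have hδε : δ ≤ ε / (2 * L + 1) := min_le_right _ _
    rw [dist_eq_norm]
    have h1 : ‖w₁ - w₂‖ < 2 * δ := by linarith
    calc ‖slope f z₀ w₁ - slope f z₀ w₂‖ ≤ L * ‖w₁ - w₂‖ := hk
      _ ≤ L * (2 * δ) := by nlinarith
      _ ≤ L * (2 * (ε / (2 * L + 1))) := by nlinarith
      _ < ε := by
          have h2L : (0:ℝ) < 2 * L + 1 := by positivity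
          have heq : L * (2 * (ε / (2 * L + 1))) = 2 * L * ε / (2 * L + 1) := by
            ring
          rw [heq, div_lt_iff₀ h2L]
          nlinarith
  obtain ⟨y, hy⟩ := CompleteSpace.complete hCauchy
  exact (hasDerivAt_iff_tendsto_slope.mpr hy).differentiableAt

/-- A weakly holomorphic Banach space valued function on an open set `Ω ⊆ ℂ`
is holomorphic in the norm sense, and admits a power series expansion on every
open disc contained in `Ω`. -/
theorem weakly_holomorphic_is_holomorphic
    {X : Type*} [NormedAddCommGroup X] [NormedSpace ℂ X] [CompleteSpace X]
    (Ω : Set ℂ) (hΩ : IsOpen Ω) (f : ℂ → X)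
    (hf : ∀ ℓ : X →L[ℂ] ℂ, DifferentiableOn ℂ (fun z => ℓ (f z)) Ω) :
    (∀ z ∈ Ω, DifferentiableAt ℂ f z) ∧
    ∀ z₀ ∈ Ω, ∀ r : ℝ, 0 < r → Metric.ball z₀ r ⊆ Ω →
      ∃ a : ℕ → X, ∀ z ∈ Metric.ball z₀ r,
        Filter.Tendsto (fun N => ∑ n ∈ Finset.range N, (z - z₀) ^ n • a n)
          Filter.atTop (nhds (f z)) := by
  have main := weakly_holo_differentiableAt Ω hΩ f hf
  refine ⟨main, ?_⟩
  intro z₀ hz₀ r hr hball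
  have hdiff : DifferentiableOn ℂ f (ball z₀ r) := fun x hx =>
    (main x (hball hx)).differentiableWithinAt
  set p := cauchyPowerSeries f z₀ (r / 2) with hp
  refine ⟨fun n => p n (fun _ => 1), ?_⟩
  intro z hz
  set t : ℝ := max (dist z z₀) (r / 2) with ht
  have htr : t < r := max_lt (mem_ball.mp hz) (by linarith)
  have ht0 : 0 < t := lt_of_lt_of_le (by linarith) (le_max_right _ _)
  have h2 : (0:ℝ) ≤ (t + r) / 2 := by positivity
  set R' : NNReal := ⟨(t + r) / 2, h2⟩ with hR'
  have hR'c : (R' : ℝ) = (t + r) / 2 := rfl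
  have hR'pos : 0 < R' := NNReal.coe_pos.mp (by rw [hR'c]; positivity)
  have hR'lt : (R' : ℝ) < r := by rw [hR'c]; linarith
  have hps' : HasFPowerSeriesOnBall f (cauchyPowerSeries f z₀ R') z₀ R' :=
    (hdiff.mono (closedBall_subset_ball hR'lt)).hasFPowerSeriesOnBall hR'pos
  have h3 : (0:ℝ) ≤ r / 2 := by positivity
  set R₀ : NNReal := ⟨r / 2, h3⟩ with hR₀
  have hR₀pos : 0 < R₀ := NNReal.coe_pos.mp (by show (0:ℝ) < r / 2; positivity)
  have hps₀ : HasFPowerSeriesOnBall f (cauchyPowerSeries f z₀ R₀) z₀ R₀ :=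
    (hdiff.mono (closedBall_subset_ball (by show (r:ℝ)/2 < r; linarith))).hasFPowerSeriesOnBall
      hR₀pos
  have hpeq : cauchyPowerSeries f z₀ (R' : ℝ) = p := by
    have h4 := hps'.hasFPowerSeriesAt.eq_formalMultilinearSeries hps₀.hasFPowerSeriesAt
    rw [h4]; rfl
  have hzball : z ∈ Metric.eball z₀ (R' : ℝ≥0∞) := by
    rw [Metric.emetric_ball_nnreal]
    have h6 : dist z z₀ ≤ t := le_max_left _ _
    exact mem_ball.mpr (by rw [hR'c]; linarith)
  have hsum := hps'.hasSum_sub hzball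
  rw [hpeq] at hsum
  have heq : ∀ n, p n (fun _ => z - z₀) = (z - z₀) ^ n • p n (fun _ => 1) := by
    intro n
    have h5 := (p n).map_smul_univ (fun _ : Fin n => z - z₀) (fun _ => 1)
    simpa [Finset.prod_const, smul_eq_mul] using h5
  simp only [heq] at hsum
  exact hsum.tendsto_sum_nat
end
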